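/- Every ℛ-stable probability measure is 𝒥-separated. Precisely: if μ is a probability mass function on X such that for every x ∈ X, Σ_{I∈𝒥} Σ_{y_I} ( φ_I(y_I, x_I) μ_I(x_I) μ(x_{Λ∖I}, y_I) − φ_I(x_I, y_I) μ_I(y_I) μ(x) ) = 0, then for every frame I ∈ 𝒥 and every x ∈ X one has μ(x) = μ_I(x_I)·μ_{Λ∖I}(x_{Λ∖I}). (No T₀ assumption on 𝒥 is needed.) -/

import Mathlib

open Finset

/-- Restriction of a word to a set of coordinates `M`. -/
def restrictW {Λ : Type*} (K : Λ → Type*) (M : Finset Λ) (x : ∀ i, K i) :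
    ∀ i : M, K i := fun i => x i

/-- Marginal of `μ` on the set of coordinates `M`. -/
def marginal {Λ : Type*} [Fintype Λ] [DecidableEq Λ] (K : Λ → Type*)
    [∀ i, Fintype (K i)] [∀ i, DecidableEq (K i)]
    (μ : (∀ i, K i) → ℝ) (M : Finset Λ) (a : ∀ i : M, K i) : ℝ :=
  ∑ x : ∀ i, K i, if restrictW K M x = a then μ x else 0

/-- One-dimensional marginal of `μ` at coordinate `i`. -/
def marg1 {Λ : Type*} [Fintype Λ] [DecidableEq Λ] (K : Λ → Type*)
    [∀ i, Fintype (K i)] [∀ i, DecidableEq (K i)]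
    (μ : (∀ i, K i) → ℝ) (i : Λ) (a : K i) : ℝ :=
  ∑ x : ∀ i, K i, if x i = a then μ x else 0

/-- `I`-recombination: the word equal to `a` on `I` and to `x` off `I`. -/
def recombW {Λ : Type*} [DecidableEq Λ] (K : Λ → Type*) (I : Finset Λ)
    (x : ∀ i, K i) (a : ∀ i : I, K i) : ∀ i, K i :=
  fun i => if h : i ∈ I then a ⟨i, h⟩ else x i

/-- Right hand side of the recombination equation. -/
def recombRHS {Λ : Type*} [Fintype Λ] [DecidableEq Λ] (K : Λ → Type*)
    [∀ i, Fintype (K i)] [∀ i, DecidableEq (K i)]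
    (𝒥 : Finset (Finset Λ))
    (φ : ∀ I : Finset Λ, (∀ i : I, K i) → (∀ i : I, K i) → ℝ)
    (μ : (∀ i, K i) → ℝ) (x : ∀ i, K i) : ℝ :=
  ∑ I ∈ 𝒥, ∑ y : ∀ i : I, K i,
    (φ I y (restrictW K I x) * marginal K μ I (restrictW K I x) * μ (recombW K I x y)
      - φ I (restrictW K I x) y * marginal K μ I y * μ x)

/-- A probability mass function on `∀ i, K i`. -/
def IsPMF {Λ : Type*} [Fintype Λ] [DecidableEq Λ] (K : Λ → Type*) [∀ i, Fintype (K i)]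
    (μ : (∀ i, K i) → ℝ) : Prop :=
  (∀ x, 0 ≤ μ x) ∧ ∑ x : ∀ i, K i, μ x = 1

/-- `𝒥`-separated measure. -/
def IsSeparated {Λ : Type*} [Fintype Λ] [DecidableEq Λ] (K : Λ → Type*)
    [∀ i, Fintype (K i)] [∀ i, DecidableEq (K i)]
    (𝒥 : Finset (Finset Λ)) (μ : (∀ i, K i) → ℝ) : Prop :=
  ∀ I ∈ 𝒥, ∀ x, μ x = marginal K μ I (restrictW K I x) * marginal K μ Iᶜ (restrictW K Iᶜ x)

/-- A `T₀`-system of frames. -/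
def IsT0 {Λ : Type*} (𝒥 : Finset (Finset Λ)) : Prop :=
  ∀ i j : Λ, i ≠ j → ∃ I ∈ 𝒥, (i ∈ I ∧ j ∉ I) ∨ (j ∈ I ∧ i ∉ I)

set_option linter.unusedSectionVars false
set_option maxHeartbeats 1000000

section
variable {Λ : Type*} [Fintype Λ] [DecidableEq Λ] (K : Λ → Type*)
  [∀ i, Fintype (K i)] [∀ i, DecidableEq (K i)]

lemma restrict_recomb (I : Finset Λ) (x : ∀ i, K i) (a : ∀ i : I, K i) :
    restrictW K I (recombW K I x a) = a := by
  funext i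
  simp [restrictW, recombW, i.2]

lemma recomb_restrict (I : Finset Λ) (x : ∀ i, K i) :
    recombW K I x (restrictW K I x) = x := by
  funext i
  by_cases h : i ∈ I <;> simp [recombW, restrictW, h]

lemma recomb_recomb (I : Finset Λ) (x : ∀ i, K i) (a b : ∀ i : I, K i) :
    recombW K I (recombW K I x a) b = recombW K I x b := by
  funext i
  by_cases h : i ∈ I <;> simp [recombW, h]

lemma recomb_recomb_restrict (I : Finset Λ) (x : ∀ i, K i) (a : ∀ i : I, K i) :
    recombW K I (recombW K I x a) (restrictW K I x) = x := by
  rw [recomb_recomb, recomb_restrict]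

variable (μ : (∀ i, K i) → ℝ)

lemma collapse (I : Finset Λ) (g : (∀ i : I, K i) → ℝ) :
    ∑ y : ∀ i : I, K i, marginal K μ I y * g y = ∑ v : ∀ i, K i, μ v * g (restrictW K I v) := by
  unfold marginal
  have h1 : ∀ y : ∀ i : I, K i,
      (∑ x : ∀ i, K i, if restrictW K I x = y then μ x else 0) * g y
      = ∑ x : ∀ i, K i, if restrictW K I x = y then μ x * g y else 0 := by
    intro y
    rw [Finset.sum_mul]
    exact Finset.sum_congr rfl fun x _ => by rw [ite_mul, zero_mul]
  simp_rw [h1]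
  rw [Finset.sum_comm]
  refine Finset.sum_congr rfl fun v _ => ?_
  rw [Finset.sum_ite_eq (Finset.univ) (restrictW K I v) (fun y => μ v * g y)]
  simp

lemma marginal_nonneg (hμ : ∀ x, 0 ≤ μ x) (M : Finset Λ) (a : ∀ i : M, K i) :
    0 ≤ marginal K μ M a := by
  apply Finset.sum_nonneg
  intro x _
  split <;> simp [hμ x]

lemma le_marginal (hμ : ∀ x, 0 ≤ μ x) (M : Finset Λ) (v : ∀ i, K i) :
    μ v ≤ marginal K μ M (restrictW K M v) := by
  have := Finset.single_le_sum
    (f := fun x => if restrictW K M x = restrictW K M v then μ x else 0)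
    (fun x _ => by split <;> simp [hμ x]) (Finset.mem_univ v)
  simpa [marginal] using this

/-- Splitting a word into its `I`-part and `Iᶜ`-part. -/
def splitEquiv (I : Finset Λ) : (∀ i, K i) ≃ ((∀ i : I, K i) × (∀ i : (Iᶜ : Finset Λ), K i)) where
  toFun x := (restrictW K I x, restrictW K Iᶜ x)
  invFun p := fun i => if h : i ∈ I then p.1 ⟨i, h⟩ else p.2 ⟨i, Finset.mem_compl.mpr h⟩
  left_inv x := by
    funext i
    by_cases h : i ∈ I <;> simp [restrictW, h]
  right_inv p := by
    refine Prod.ext ?_ ?_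
    · funext i
      simp [restrictW, i.2]
    · funext i
      have h : (i : Λ) ∉ I := Finset.mem_compl.mp i.2
      simp [restrictW, h]

lemma symm_splitEquiv_fst (I : Finset Λ) (x : ∀ i, K i) (a : ∀ i : I, K i) :
    (splitEquiv K I).symm (a, restrictW K Iᶜ x) = recombW K I x a := by
  funext i
  by_cases h : i ∈ I <;> simp [splitEquiv, recombW, restrictW, h]

lemma restrict_symm_fst (I : Finset Λ) (p : (∀ i : I, K i) × (∀ i : (Iᶜ : Finset Λ), K i)) :
    restrictW K I ((splitEquiv K I).symm p) = p.1 :=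
  congrArg Prod.fst ((splitEquiv K I).apply_symm_apply p)

lemma restrict_symm_snd (I : Finset Λ) (p : (∀ i : I, K i) × (∀ i : (Iᶜ : Finset Λ), K i)) :
    restrictW K Iᶜ ((splitEquiv K I).symm p) = p.2 :=
  congrArg Prod.snd ((splitEquiv K I).apply_symm_apply p)

variable (μ : (∀ i, K i) → ℝ)

lemma sum_recomb_eq_marginal_compl (I : Finset Λ) (x : ∀ i, K i) :
    ∑ a : ∀ i : I, K i, μ (recombW K I x a) = marginal K μ Iᶜ (restrictW K Iᶜ x) := by
  unfold marginal
  rw [← Equiv.sum_comp (splitEquiv K I).symm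
    (fun w => if restrictW K Iᶜ w = restrictW K Iᶜ x then μ w else 0)]
  rw [Fintype.sum_prod_type]
  refine Finset.sum_congr rfl fun a _ => ?_
  simp_rw [restrict_symm_snd]
  rw [Finset.sum_ite_eq' Finset.univ (restrictW K Iᶜ x)
    (fun b => μ ((splitEquiv K I).symm (a, b)))]
  simp [symm_splitEquiv_fst]

lemma sum_snd_eq_marginal (I : Finset Λ) (c : ∀ i : I, K i) :
    ∑ b : ∀ i : (Iᶜ : Finset Λ), K i, μ ((splitEquiv K I).symm (c, b))
      = marginal K μ I c := by
  unfold marginal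
  rw [← Equiv.sum_comp (splitEquiv K I).symm
    (fun w => if restrictW K I w = c then μ w else 0)]
  rw [Fintype.sum_prod_type]
  simp_rw [restrict_symm_fst]
  rw [Finset.sum_comm]
  rw [Finset.sum_congr rfl (fun b _ => Finset.sum_ite_eq' Finset.univ c
    (fun a => μ ((splitEquiv K I).symm (a, b))))]
  simp



lemma recomb_symm (I : Finset Λ) (p : (∀ i : I, K i) × (∀ i : (Iᶜ : Finset Λ), K i))
    (x : ∀ i, K i) :
    recombW K I ((splitEquiv K I).symm p) (restrictW K I x)
      = (splitEquiv K I).symm (restrictW K I x, p.2) := by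
  funext i
  by_cases h : i ∈ I <;> simp [recombW, splitEquiv, restrictW, h]

variable (𝒥 : Finset (Finset Λ)) (φ : ∀ I : Finset Λ, (∀ i : I, K i) → (∀ i : I, K i) → ℝ)

/-- The pair (two-body) form of stationarity. -/
lemma stepA (hstable : ∀ x, recombRHS K 𝒥 φ μ x = 0) (f : (∀ i, K i) → ℝ) :
    ∑ I ∈ 𝒥, ∑ x : ∀ i, K i, ∑ v : ∀ i, K i,
      φ I (restrictW K I x) (restrictW K I v) * (μ x * μ v) *
        (f (recombW K I x (restrictW K I v)) - f x) = 0 := by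
  have h0 : ∑ x : ∀ i, K i, f x * recombRHS K 𝒥 φ μ x = 0 := by simp [hstable]
  have h1 : ∑ x : ∀ i, K i, f x * recombRHS K 𝒥 φ μ x
      = ∑ I ∈ 𝒥, ∑ x : ∀ i, K i, ∑ y : ∀ i : I, K i, f x *
        (φ I y (restrictW K I x) * marginal K μ I (restrictW K I x) * μ (recombW K I x y)
          - φ I (restrictW K I x) y * marginal K μ I y * μ x) := by
    unfold recombRHS
    simp_rw [Finset.mul_sum]
    apply Finset.sum_comm
  rw [h1] at h0
  rw [← h0]
  refine Finset.sum_congr rfl fun I _ => ?_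
  -- now fixed I; goal: LHS_I = ∑ x, ∑ y, f x * (A - B)
  have expand : ∑ x : ∀ i, K i, ∑ y : ∀ i : I, K i, f x *
      (φ I y (restrictW K I x) * marginal K μ I (restrictW K I x) * μ (recombW K I x y)
        - φ I (restrictW K I x) y * marginal K μ I y * μ x)
      = (∑ x : ∀ i, K i, ∑ y : ∀ i : I, K i,
          φ I y (restrictW K I x) * marginal K μ I (restrictW K I x) * μ (recombW K I x y) * f x)
        - (∑ x : ∀ i, K i, ∑ y : ∀ i : I, K i,
          φ I (restrictW K I x) y * marginal K μ I y * (μ x * f x)) := by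
    rw [← Finset.sum_sub_distrib]
    refine Finset.sum_congr rfl fun x _ => ?_
    rw [← Finset.sum_sub_distrib]
    exact Finset.sum_congr rfl fun y _ => by ring
  rw [expand]
  -- reindex the first double sum by the involution (x,y) ↦ (recomb x y, restrict x)
  have hinv : Function.Involutive
      (fun p : (∀ i, K i) × (∀ i : I, K i) => (recombW K I p.1 p.2, restrictW K I p.1)) := by
    intro p
    refine Prod.ext ?_ ?_
    · exact recomb_recomb_restrict K I p.1 p.2
    · exact restrict_recomb K I p.1 p.2
  have reidx : ∑ x : ∀ i, K i, ∑ y : ∀ i : I, K i,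
      φ I y (restrictW K I x) * marginal K μ I (restrictW K I x) * μ (recombW K I x y) * f x
      = ∑ x : ∀ i, K i, ∑ y : ∀ i : I, K i,
      φ I (restrictW K I x) y * marginal K μ I y * (μ x * f (recombW K I x y)) := by
    calc ∑ x : ∀ i, K i, ∑ y : ∀ i : I, K i,
        φ I y (restrictW K I x) * marginal K μ I (restrictW K I x) * μ (recombW K I x y) * f x
        = ∑ p : (∀ i, K i) × (∀ i : I, K i),
            φ I p.2 (restrictW K I p.1) * marginal K μ I (restrictW K I p.1)
              * μ (recombW K I p.1 p.2) * f p.1 := by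
          exact (Fintype.sum_prod_type (f := fun p : (∀ i, K i) × (∀ i : I, K i) =>
            φ I p.2 (restrictW K I p.1) * marginal K μ I (restrictW K I p.1)
              * μ (recombW K I p.1 p.2) * f p.1)).symm
      _ = ∑ p : (∀ i, K i) × (∀ i : I, K i),
            φ I (restrictW K I p.1) p.2 * marginal K μ I p.2
              * (μ p.1 * f (recombW K I p.1 p.2)) := by
          refine Fintype.sum_equiv hinv.toPerm _ _ fun p => ?_
          show _ = φ I (restrictW K I (recombW K I p.1 p.2)) (restrictW K I p.1)
              * marginal K μ I (restrictW K I p.1)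
              * (μ (recombW K I p.1 p.2) * f (recombW K I (recombW K I p.1 p.2) (restrictW K I p.1)))
          rw [restrict_recomb, recomb_recomb_restrict]
          ring
      _ = ∑ x : ∀ i, K i, ∑ y : ∀ i : I, K i,
            φ I (restrictW K I x) y * marginal K μ I y * (μ x * f (recombW K I x y)) := by
          exact Fintype.sum_prod_type (f := fun p : (∀ i, K i) × (∀ i : I, K i) =>
            φ I (restrictW K I p.1) p.2 * marginal K μ I p.2 * (μ p.1 * f (recombW K I p.1 p.2)))
  rw [reidx]
  -- collapse the marginals
  have c1 : ∑ x : ∀ i, K i, ∑ y : ∀ i : I, K i,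
      φ I (restrictW K I x) y * marginal K μ I y * (μ x * f (recombW K I x y))
      = ∑ x : ∀ i, K i, ∑ v : ∀ i, K i,
        μ v * (φ I (restrictW K I x) (restrictW K I v) * (μ x * f (recombW K I x (restrictW K I v)))) := by
    refine Finset.sum_congr rfl fun x _ => ?_
    rw [← collapse K μ I (fun y => φ I (restrictW K I x) y * (μ x * f (recombW K I x y)))]
    exact Finset.sum_congr rfl fun y _ => by ring
  have c2 : ∑ x : ∀ i, K i, ∑ y : ∀ i : I, K i,
      φ I (restrictW K I x) y * marginal K μ I y * (μ x * f x)
      = ∑ x : ∀ i, K i, ∑ v : ∀ i, K i,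
        μ v * (φ I (restrictW K I x) (restrictW K I v) * (μ x * f x)) := by
    refine Finset.sum_congr rfl fun x _ => ?_
    rw [← collapse K μ I (fun y => φ I (restrictW K I x) y * (μ x * f x))]
    exact Finset.sum_congr rfl fun y _ => by ring
  rw [c1, c2, ← Finset.sum_sub_distrib]
  refine Finset.sum_congr rfl fun x _ => ?_
  rw [← Finset.sum_sub_distrib]
  exact Finset.sum_congr rfl fun v _ => by ring

/-- At a stationary point, recombining two points of the support stays in the support. -/
lemma pos_recomb (hpos : ∀ x, 0 ≤ μ x)
    (hφpos : ∀ I ∈ 𝒥, ∀ a b, 0 < φ I a b)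
    (hstable : ∀ x, recombRHS K 𝒥 φ μ x = 0)
    {I : Finset Λ} (hI : I ∈ 𝒥) {u v : ∀ i, K i}
    (hu : 0 < μ u) (hv : 0 < μ v) :
    0 < μ (recombW K I u (restrictW K I v)) := by
  by_contra hcon
  have h0 : μ (recombW K I u (restrictW K I v)) = 0 :=
    le_antisymm (not_lt.mp hcon) (hpos _)
  have hst := hstable (recombW K I u (restrictW K I v))
  unfold recombRHS at hst
  set x' := recombW K I u (restrictW K I v) with hx'
  have key : ∀ J ∈ 𝒥, ∀ y : ∀ i : J, K i,
      (0:ℝ) ≤ φ J y (restrictW K J x') * marginal K μ J (restrictW K J x') * μ (recombW K J x' y)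
        - φ J (restrictW K J x') y * marginal K μ J y * μ x' := by
    intro J hJ y
    rw [h0, mul_zero, sub_zero]
    exact mul_nonneg (mul_nonneg (le_of_lt (hφpos J hJ _ _))
      (marginal_nonneg K μ hpos J _)) (hpos _)
  -- the particular term at J = I, y = restrict u is positive
  have hterm : (0:ℝ) < φ I (restrictW K I u) (restrictW K I x')
      * marginal K μ I (restrictW K I x') * μ (recombW K I x' (restrictW K I u))
      - φ I (restrictW K I x') (restrictW K I u) * marginal K μ I (restrictW K I u) * μ x' := by
    rw [h0, mul_zero, sub_zero, hx', restrict_recomb, recomb_recomb_restrict]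
    have h1 : (0:ℝ) < marginal K μ I (restrictW K I v) :=
      lt_of_lt_of_le hv (le_marginal K μ hpos I v)
    exact mul_pos (mul_pos (hφpos I hI _ _) h1) hu
  have h2 : (φ I (restrictW K I u) (restrictW K I x')
      * marginal K μ I (restrictW K I x') * μ (recombW K I x' (restrictW K I u))
      - φ I (restrictW K I x') (restrictW K I u) * marginal K μ I (restrictW K I u) * μ x')
      ≤ ∑ y : ∀ i : I, K i,
        (φ I y (restrictW K I x') * marginal K μ I (restrictW K I x') * μ (recombW K I x' y)
          - φ I (restrictW K I x') y * marginal K μ I y * μ x') :=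
    Finset.single_le_sum (fun y _ => key I hI y) (Finset.mem_univ _)
  have h3 : (∑ y : ∀ i : I, K i,
        (φ I y (restrictW K I x') * marginal K μ I (restrictW K I x') * μ (recombW K I x' y)
          - φ I (restrictW K I x') y * marginal K μ I y * μ x'))
      ≤ ∑ J ∈ 𝒥, ∑ y : ∀ i : J, K i,
        (φ J y (restrictW K J x') * marginal K μ J (restrictW K J x') * μ (recombW K J x' y)
          - φ J (restrictW K J x') y * marginal K μ J y * μ x') :=
    Finset.single_le_sum (f := fun J : Finset Λ => ∑ y : ∀ i : J, K i,
        (φ J y (restrictW K J x') * marginal K μ J (restrictW K J x') * μ (recombW K J x' y)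
          - φ J (restrictW K J x') y * marginal K μ J y * μ x'))
      (fun J hJ => Finset.sum_nonneg fun y _ => key J hJ y) hI
  linarith

/-- The fully symmetrized pair identity with an arbitrary test function. -/
lemma pairIdentity (hφsymm : ∀ I ∈ 𝒥, ∀ a b, φ I a b = φ I b a)
    (hstable : ∀ x, recombRHS K 𝒥 φ μ x = 0) (f : (∀ i, K i) → ℝ) :
    ∑ I ∈ 𝒥, ∑ x : ∀ i, K i, ∑ v : ∀ i, K i,
      φ I (restrictW K I x) (restrictW K I v) * (μ x * μ v) *
        ((f (recombW K I x (restrictW K I v)) + f (recombW K I v (restrictW K I x)))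
          - (f x + f v)) = 0 := by
  have B1 := stepA K μ 𝒥 φ hstable f
  have B2 : ∑ I ∈ 𝒥, ∑ x : ∀ i, K i, ∑ v : ∀ i, K i,
      φ I (restrictW K I x) (restrictW K I v) * (μ x * μ v) *
        (f (recombW K I v (restrictW K I x)) - f v) = 0 := by
    rw [← B1]
    refine Finset.sum_congr rfl fun I hI => ?_
    rw [Finset.sum_comm]
    refine Finset.sum_congr rfl fun x _ => Finset.sum_congr rfl fun v _ => ?_
    rw [hφsymm I hI (restrictW K I v) (restrictW K I x)]
    ring
  calc ∑ I ∈ 𝒥, ∑ x : ∀ i, K i, ∑ v : ∀ i, K i,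
      φ I (restrictW K I x) (restrictW K I v) * (μ x * μ v) *
        ((f (recombW K I x (restrictW K I v)) + f (recombW K I v (restrictW K I x)))
          - (f x + f v))
      = (∑ I ∈ 𝒥, ∑ x : ∀ i, K i, ∑ v : ∀ i, K i,
          φ I (restrictW K I x) (restrictW K I v) * (μ x * μ v) *
            (f (recombW K I x (restrictW K I v)) - f x))
        + (∑ I ∈ 𝒥, ∑ x : ∀ i, K i, ∑ v : ∀ i, K i,
          φ I (restrictW K I x) (restrictW K I v) * (μ x * μ v) *
            (f (recombW K I v (restrictW K I x)) - f v)) := by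
        rw [← Finset.sum_add_distrib]
        refine Finset.sum_congr rfl fun I _ => ?_
        rw [← Finset.sum_add_distrib]
        refine Finset.sum_congr rfl fun x _ => ?_
        rw [← Finset.sum_add_distrib]
        exact Finset.sum_congr rfl fun v _ => by ring
    _ = 0 := by rw [B1, B2, add_zero]

/-- The entropy-production identity. -/
lemma entropyIdentity (hφsymm : ∀ I ∈ 𝒥, ∀ a b, φ I a b = φ I b a)
    (hstable : ∀ x, recombRHS K 𝒥 φ μ x = 0) :
    ∑ I ∈ 𝒥, ∑ x : ∀ i, K i, ∑ v : ∀ i, K i,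
      φ I (restrictW K I x) (restrictW K I v) *
        ((μ x * μ v - μ (recombW K I x (restrictW K I v)) * μ (recombW K I v (restrictW K I x))) *
        ((Real.log (μ (recombW K I x (restrictW K I v)))
            + Real.log (μ (recombW K I v (restrictW K I x))))
          - (Real.log (μ x) + Real.log (μ v)))) = 0 := by
  set f : (∀ i, K i) → ℝ := fun z => Real.log (μ z) with hf
  have E1 := pairIdentity K μ 𝒥 φ hφsymm hstable f
  -- reindex E1 by the pair involution
  have E2 : ∑ I ∈ 𝒥, ∑ x : ∀ i, K i, ∑ v : ∀ i, K i,
      φ I (restrictW K I x) (restrictW K I v) *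
        (μ (recombW K I x (restrictW K I v)) * μ (recombW K I v (restrictW K I x))) *
        ((f x + f v)
          - (f (recombW K I x (restrictW K I v)) + f (recombW K I v (restrictW K I x)))) = 0 := by
    rw [← E1]
    refine Finset.sum_congr rfl fun I hI => ?_
    have hτ : Function.Involutive
        (fun p : (∀ i, K i) × (∀ i, K i) =>
          (recombW K I p.1 (restrictW K I p.2), recombW K I p.2 (restrictW K I p.1))) := by
      intro p
      refine Prod.ext ?_ ?_ <;> dsimp only <;>
        rw [restrict_recomb, recomb_recomb, recomb_restrict]
    calc ∑ x : ∀ i, K i, ∑ v : ∀ i, K i,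
        φ I (restrictW K I x) (restrictW K I v) *
          (μ (recombW K I x (restrictW K I v)) * μ (recombW K I v (restrictW K I x))) *
          ((f x + f v)
            - (f (recombW K I x (restrictW K I v)) + f (recombW K I v (restrictW K I x))))
        = ∑ p : (∀ i, K i) × (∀ i, K i),
            φ I (restrictW K I p.1) (restrictW K I p.2) *
              (μ (recombW K I p.1 (restrictW K I p.2)) * μ (recombW K I p.2 (restrictW K I p.1))) *
              ((f p.1 + f p.2)
                - (f (recombW K I p.1 (restrictW K I p.2))
                   + f (recombW K I p.2 (restrictW K I p.1)))) := by
          exact (Fintype.sum_prod_type (f := fun p : (∀ i, K i) × (∀ i, K i) =>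
            φ I (restrictW K I p.1) (restrictW K I p.2) *
              (μ (recombW K I p.1 (restrictW K I p.2)) * μ (recombW K I p.2 (restrictW K I p.1))) *
              ((f p.1 + f p.2)
                - (f (recombW K I p.1 (restrictW K I p.2))
                   + f (recombW K I p.2 (restrictW K I p.1)))))).symm
      _ = ∑ p : (∀ i, K i) × (∀ i, K i),
            φ I (restrictW K I p.1) (restrictW K I p.2) * (μ p.1 * μ p.2) *
              ((f (recombW K I p.1 (restrictW K I p.2))
                + f (recombW K I p.2 (restrictW K I p.1))) - (f p.1 + f p.2)) := by
          refine Fintype.sum_equiv hτ.toPerm _ _ fun p => ?_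
          show _ = φ I (restrictW K I (recombW K I p.1 (restrictW K I p.2)))
                (restrictW K I (recombW K I p.2 (restrictW K I p.1)))
              * (μ (recombW K I p.1 (restrictW K I p.2)) * μ (recombW K I p.2 (restrictW K I p.1)))
              * ((f (recombW K I (recombW K I p.1 (restrictW K I p.2))
                      (restrictW K I (recombW K I p.2 (restrictW K I p.1))))
                  + f (recombW K I (recombW K I p.2 (restrictW K I p.1))
                      (restrictW K I (recombW K I p.1 (restrictW K I p.2)))))
                - (f (recombW K I p.1 (restrictW K I p.2))
                   + f (recombW K I p.2 (restrictW K I p.1))))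
          rw [restrict_recomb, restrict_recomb, recomb_recomb, recomb_recomb,
            recomb_restrict, recomb_restrict]
          rw [hφsymm I hI (restrictW K I p.2) (restrictW K I p.1)]
      _ = ∑ x : ∀ i, K i, ∑ v : ∀ i, K i,
            φ I (restrictW K I x) (restrictW K I v) * (μ x * μ v) *
              ((f (recombW K I x (restrictW K I v))
                + f (recombW K I v (restrictW K I x))) - (f x + f v)) := by
          exact Fintype.sum_prod_type (f := fun p : (∀ i, K i) × (∀ i, K i) =>
            φ I (restrictW K I p.1) (restrictW K I p.2) * (μ p.1 * μ p.2) *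
              ((f (recombW K I p.1 (restrictW K I p.2))
                + f (recombW K I p.2 (restrictW K I p.1))) - (f p.1 + f p.2)))
  calc ∑ I ∈ 𝒥, ∑ x : ∀ i, K i, ∑ v : ∀ i, K i,
      φ I (restrictW K I x) (restrictW K I v) *
        ((μ x * μ v - μ (recombW K I x (restrictW K I v)) * μ (recombW K I v (restrictW K I x))) *
        ((Real.log (μ (recombW K I x (restrictW K I v)))
            + Real.log (μ (recombW K I v (restrictW K I x))))
          - (Real.log (μ x) + Real.log (μ v))))
      = (∑ I ∈ 𝒥, ∑ x : ∀ i, K i, ∑ v : ∀ i, K i,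
          φ I (restrictW K I x) (restrictW K I v) * (μ x * μ v) *
            ((f (recombW K I x (restrictW K I v)) + f (recombW K I v (restrictW K I x)))
              - (f x + f v)))
        + (∑ I ∈ 𝒥, ∑ x : ∀ i, K i, ∑ v : ∀ i, K i,
          φ I (restrictW K I x) (restrictW K I v) *
            (μ (recombW K I x (restrictW K I v)) * μ (recombW K I v (restrictW K I x))) *
            ((f x + f v)
              - (f (recombW K I x (restrictW K I v)) + f (recombW K I v (restrictW K I x))))) := by
        rw [← Finset.sum_add_distrib]
        refine Finset.sum_congr rfl fun I _ => ?_
        rw [← Finset.sum_add_distrib]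
        refine Finset.sum_congr rfl fun x _ => ?_
        rw [← Finset.sum_add_distrib]
        refine Finset.sum_congr rfl fun v _ => ?_
        simp only [hf]
        ring
    _ = 0 := by rw [pairIdentity K μ 𝒥 φ hφsymm hstable f, E2, add_zero]

lemma recomb_cancel (I : Finset Λ) (u v : ∀ i, K i) :
    recombW K I (recombW K I u (restrictW K I v))
      (restrictW K I (recombW K I v (restrictW K I u))) = u := by
  rw [restrict_recomb, recomb_recomb, recomb_restrict]

lemma logfactor_nonpos {a b : ℝ} (ha : 0 < a) (hb : 0 < b) :
    (a - b) * (Real.log b - Real.log a) ≤ 0 := by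
  rcases lt_trichotomy a b with h|h|h
  · nlinarith [Real.log_lt_log ha h]
  · simp [h]
  · nlinarith [Real.log_lt_log hb h]

lemma logfactor_eq {a b : ℝ} (ha : 0 < a) (hb : 0 < b)
    (h : (a - b) * (Real.log b - Real.log a) = 0) : a = b := by
  rcases lt_trichotomy a b with h'|h'|h'
  · nlinarith [Real.log_lt_log ha h']
  · exact h'
  · nlinarith [Real.log_lt_log hb h']

/-- Detailed balance at a stable point. -/
lemma detailedBalance (hμ : IsPMF K μ)
    (hφpos : ∀ I ∈ 𝒥, ∀ a b, 0 < φ I a b)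
    (hφsymm : ∀ I ∈ 𝒥, ∀ a b, φ I a b = φ I b a)
    (hstable : ∀ x, recombRHS K 𝒥 φ μ x = 0)
    {I : Finset Λ} (hI : I ∈ 𝒥) (u v : ∀ i, K i) :
    μ u * μ v = μ (recombW K I u (restrictW K I v)) * μ (recombW K I v (restrictW K I u)) := by
  obtain ⟨hpos, hsum⟩ := hμ
  have hposfac : ∀ x w : ∀ i, K i, 0 < μ x * μ w → 0 < μ x ∧ 0 < μ w := by
    intro x w h
    constructor
    · rcases (hpos x).lt_or_eq with h'|h'
      · exact h'
      · exact absurd h (by rw [← h', zero_mul]; exact lt_irrefl 0)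
    · rcases (hpos w).lt_or_eq with h'|h'
      · exact h'
      · exact absurd h (by rw [← h', mul_zero]; exact lt_irrefl 0)
  have hPP' : ∀ J ∈ 𝒥, ∀ x w : ∀ i, K i, 0 < μ x * μ w →
      0 < μ (recombW K J x (restrictW K J w)) * μ (recombW K J w (restrictW K J x)) := by
    intro J hJ x w h
    obtain ⟨hx, hw⟩ := hposfac x w h
    exact mul_pos (pos_recomb K μ 𝒥 φ hpos hφpos hstable hJ hx hw)
      (pos_recomb K μ 𝒥 φ hpos hφpos hstable hJ hw hx)
  -- dichotomy for each term
  have main : ∀ J ∈ 𝒥, ∀ x w : ∀ i, K i,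
      (0 < μ x * μ w ∧
        0 < μ (recombW K J x (restrictW K J w)) * μ (recombW K J w (restrictW K J x)) ∧
        (Real.log (μ (recombW K J x (restrictW K J w)))
            + Real.log (μ (recombW K J w (restrictW K J x))))
          - (Real.log (μ x) + Real.log (μ w))
        = Real.log (μ (recombW K J x (restrictW K J w)) * μ (recombW K J w (restrictW K J x)))
          - Real.log (μ x * μ w)) ∨
      (μ x * μ w = 0 ∧
        μ (recombW K J x (restrictW K J w)) * μ (recombW K J w (restrictW K J x)) = 0) := by
    intro J hJ x w
    by_cases h : 0 < μ x * μ w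
    · left
      obtain ⟨hx, hw⟩ := hposfac x w h
      obtain ⟨hx', hw'⟩ := hposfac _ _ (hPP' J hJ x w h)
      exact ⟨h, hPP' J hJ x w h,
        by rw [Real.log_mul hx'.ne' hw'.ne', Real.log_mul hx.ne' hw.ne']⟩
    · right
      have h0 : μ x * μ w = 0 :=
        le_antisymm (not_lt.mp h) (mul_nonneg (hpos x) (hpos w))
      refine ⟨h0, ?_⟩
      by_contra h1
      have h2 : 0 < μ (recombW K J x (restrictW K J w)) * μ (recombW K J w (restrictW K J x)) :=
        lt_of_le_of_ne (mul_nonneg (hpos _) (hpos _)) (Ne.symm h1)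
      have h3 := hPP' J hJ _ _ h2
      rw [recomb_cancel, recomb_cancel] at h3
      exact h h3
  have nonpos : ∀ J ∈ 𝒥, ∀ x w : ∀ i, K i,
      φ J (restrictW K J x) (restrictW K J w) *
        ((μ x * μ w
            - μ (recombW K J x (restrictW K J w)) * μ (recombW K J w (restrictW K J x))) *
        ((Real.log (μ (recombW K J x (restrictW K J w)))
            + Real.log (μ (recombW K J w (restrictW K J x))))
          - (Real.log (μ x) + Real.log (μ w)))) ≤ 0 := by
    intro J hJ x w
    rcases main J hJ x w with ⟨h1, h2, h3⟩ | ⟨h1, h2⟩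
    · rw [h3]
      exact mul_nonpos_iff.mpr (Or.inl ⟨le_of_lt (hφpos J hJ _ _), logfactor_nonpos h1 h2⟩)
    · rw [h1, h2]
      simp
  -- extract the vanishing of the individual term at (I, u, v)
  have E3 := entropyIdentity K μ 𝒥 φ hφsymm hstable
  have z1 := (Finset.sum_eq_zero_iff_of_nonpos
    (fun J hJ => Finset.sum_nonpos fun x _ => Finset.sum_nonpos fun w _ =>
      nonpos J hJ x w)).mp E3 I hI
  have z2 := (Finset.sum_eq_zero_iff_of_nonpos
    (fun x _ => Finset.sum_nonpos fun w _ => nonpos I hI x w)).mp z1 u (Finset.mem_univ u)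
  have z3 := (Finset.sum_eq_zero_iff_of_nonpos
    (fun w _ => nonpos I hI u w)).mp z2 v (Finset.mem_univ v)
  -- conclude
  have hφne : φ I (restrictW K I u) (restrictW K I v) ≠ 0 := (hφpos I hI _ _).ne'
  have z4 := (mul_eq_zero.mp z3).resolve_left hφne
  rcases main I hI u v with ⟨h1, h2, h3⟩ | ⟨h1, h2⟩
  · rw [h3] at z4
    exact logfactor_eq h1 h2 z4
  · rw [h1, h2]


end

/-- every `ℛ`-stable probability measure is `𝒥`-separated. -/
theorem stable_is_separated {Λ : Type*} [Fintype Λ] [DecidableEq Λ] [Nonempty Λ]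
    (K : Λ → Type*) [∀ i, Fintype (K i)] [∀ i, DecidableEq (K i)] [∀ i, Nonempty (K i)]
    (𝒥 : Finset (Finset Λ))
    (φ : ∀ I : Finset Λ, (∀ i : I, K i) → (∀ i : I, K i) → ℝ)
    (hφpos : ∀ I ∈ 𝒥, ∀ a b, 0 < φ I a b)
    (hφsymm : ∀ I ∈ 𝒥, ∀ a b, φ I a b = φ I b a)
    (μ : (∀ i, K i) → ℝ) (hμ : IsPMF K μ)
    (hstable : ∀ x, recombRHS K 𝒥 φ μ x = 0) :
    IsSeparated K 𝒥 μ := by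
  intro I hI x
  calc μ x = μ x * ∑ v : ∀ i, K i, μ v := by rw [hμ.2, mul_one]
    _ = ∑ v : ∀ i, K i, μ x * μ v := Finset.mul_sum _ _ _
    _ = ∑ v : ∀ i, K i,
          μ (recombW K I x (restrictW K I v)) * μ (recombW K I v (restrictW K I x)) :=
        Finset.sum_congr rfl fun v _ =>
          detailedBalance K μ 𝒥 φ hμ hφpos hφsymm hstable hI x v
    _ = ∑ p : (∀ i : I, K i) × (∀ i : (Iᶜ : Finset Λ), K i),
          μ (recombW K I x p.1) * μ ((splitEquiv K I).symm (restrictW K I x, p.2)) := by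
        rw [← Equiv.sum_comp (splitEquiv K I).symm
          (fun v => μ (recombW K I x (restrictW K I v)) * μ (recombW K I v (restrictW K I x)))]
        refine Finset.sum_congr rfl fun p _ => ?_
        rw [restrict_symm_fst, recomb_symm]
    _ = ∑ a : ∀ i : I, K i, ∑ b : ∀ i : (Iᶜ : Finset Λ), K i,
          μ (recombW K I x a) * μ ((splitEquiv K I).symm (restrictW K I x, b)) := by
        exact Fintype.sum_prod_type (f := fun p : (∀ i : I, K i) × (∀ i : (Iᶜ : Finset Λ), K i) =>
          μ (recombW K I x p.1) * μ ((splitEquiv K I).symm (restrictW K I x, p.2)))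
    _ = (∑ a : ∀ i : I, K i, μ (recombW K I x a)) *
          (∑ b : ∀ i : (Iᶜ : Finset Λ), K i, μ ((splitEquiv K I).symm (restrictW K I x, b))) :=
        (Finset.sum_mul_sum _ _ _ _).symm
    _ = marginal K μ Iᶜ (restrictW K Iᶜ x) * marginal K μ I (restrictW K I x) := by
        rw [sum_recomb_eq_marginal_compl, sum_snd_eq_marginal]
    _ = marginal K μ I (restrictW K I x) * marginal K μ Iᶜ (restrictW K Iᶜ x) := mul_comm _ _
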